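/- Let A be a finite alphabet with zero symbol, r ∈ ℕ, and X ⊆ A^{ℤ³} a subshift. Then the r-zero-gluing closure of X equals the set of all x ∈ A^{ℤ³} such that every r-connected component configuration of x is an r-connected component configuration of some element of X. -/

import Mathlib

/-- The group `ℤ³`. -/
abbrev V3 : Type := ℤ × ℤ × ℤ

/-- The product topology on configurations `ι → A`, where the alphabet `A`
carries the discrete topology. -/
def prodTop (ι A : Type) : TopologicalSpace (ι → A) :=
  @Pi.topologicalSpace ι (fun _ => A) (fun _ => ⊥)

/-- The shift action: `(σ_v x)_u = x_{u - v}`. -/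
def shift {ι A : Type} [Sub ι] (v : ι) (x : ι → A) : ι → A := fun u => x (u - v)

/-- A subshift: a closed, shift-invariant set of configurations. -/
def IsSubshift {ι A : Type} [Sub ι] (X : Set (ι → A)) : Prop :=
  @IsClosed _ (prodTop ι A) X ∧ ∀ (v : ι), ∀ x ∈ X, shift v x ∈ X

/-- A subshift of finite type: defined by a finite set `F` of forbidden patterns
on a finite domain `D`. -/
def IsSFT {ι A : Type} [Add ι] (X : Set (ι → A)) : Prop :=
  ∃ (D : Finset ι) (F : Set (↥D → A)),
    X = {x : ι → A | ∀ v : ι, (fun u : ↥D => x (v + (u : ι))) ∉ F}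

/-- The subspace topology on a set of configurations. -/
def subTop {ι A : Type} (X : Set (ι → A)) : TopologicalSpace ↥X :=
  TopologicalSpace.induced Subtype.val (prodTop ι A)

/-- The ℤ-trace (projective ℤ-subdynamics) of a three-dimensional subshift. -/
def trace {A : Type} (X : Set (V3 → A)) : Set (ℤ → A) :=
  {y : ℤ → A | ∃ x ∈ X, ∀ n : ℤ, y n = x (0, 0, n)}

/-- `spa z Y`: the least `k` such that `Y` is `k`-sparse (`⊤` if there is none). -/
noncomputable def spa {A : Type} (z : A) (Y : Set (ℤ → A)) : ℕ∞ :=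
  sInf {k : ℕ∞ | ∀ y ∈ Y, {n : ℤ | y n ≠ z}.encard ≤ k}

/-- `ES z Y`: essential sparseness, the least `k` such that for some radius `r`,
the support of every `y ∈ Y` is covered by `k` intervals of radius `r`
(`⊤` if there is none). -/
noncomputable def ES {A : Type} (z : A) (Y : Set (ℤ → A)) : ℕ∞ :=
  sInf {k : ℕ∞ | ∃ r : ℕ, ∀ y ∈ Y, ∃ N : Set ℤ,
    N.encard ≤ k ∧ ∀ n : ℤ, y n ≠ z → ∃ m ∈ N, |n - m| ≤ (r : ℤ)}

/-- Vertical determinism: two configurations agreeing on the lower half-space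
`{(i,j,k) : k < 0}` are equal. -/
def VertDet {A : Type} (X : Set (V3 → A)) : Prop :=
  ∀ x ∈ X, ∀ y ∈ X, (∀ v : V3, v.2.2 < 0 → x v = y v) → x = y

/-- A 0-to-0 conjugacy between pointed three-dimensional subshifts:
a shift-equivariant homeomorphism sending the all-zero configuration to
the all-zero configuration (both subshifts contain their all-zero configurations). -/
def ZeroConj {A B : Type} (zA : A) (zB : B)
    (X : Set (V3 → A)) (X' : Set (V3 → B)) : Prop :=
  ((fun _ => zA) ∈ X) ∧ ((fun _ => zB) ∈ X') ∧
  ∃ φ : @Homeomorph ↥X ↥X' (subTop X) (subTop X'),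
    (∀ (v : V3) (x : ↥X) (h : shift v x.1 ∈ X),
      (φ ⟨shift v x.1, h⟩).1 = shift v (φ x).1) ∧
    (∀ x : ↥X, x.1 = (fun _ => zA) → (φ x).1 = (fun _ => zB))

/-- `α(X) = spa(T(X))`. -/
noncomputable def alphaInv {A : Type} (z : A) (X : Set (V3 → A)) : ℕ∞ :=
  spa z (trace X)

/-- `β(X) = ES(T(X))`. -/
noncomputable def betaInv {A : Type} (z : A) (X : Set (V3 → A)) : ℕ∞ :=
  ES z (trace X)

/-- `underline-α(X)`: the infimum of `α(X')` over all subshifts `X'`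
0-to-0 conjugate to `X`. -/
noncomputable def ulAlpha {A : Type} (zA : A) (X : Set (V3 → A)) : ℕ∞ :=
  sInf {k : ℕ∞ | ∃ (B : Type) (_ : Fintype B) (zB : B) (X' : Set (V3 → B)),
    IsSubshift X' ∧ ZeroConj zA zB X X' ∧ alphaInv zB X' = k}

/-- `underline-β(X)`: the infimum of `β(X')` over all subshifts `X'`
0-to-0 conjugate to `X`. -/
noncomputable def ulBeta {A : Type} (zA : A) (X : Set (V3 → A)) : ℕ∞ :=
  sInf {k : ℕ∞ | ∃ (B : Type) (_ : Fintype B) (zB : B) (X' : Set (V3 → B)),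
    IsSubshift X' ∧ ZeroConj zA zB X X' ∧ betaInv zB X' = k}

/-- `overline-β(X)`: the supremum of `β(X')` over all subshifts `X'`
0-to-0 conjugate to `X`. -/
noncomputable def olBeta {A : Type} (zA : A) (X : Set (V3 → A)) : ℕ∞ :=
  sSup {k : ℕ∞ | ∃ (B : Type) (_ : Fintype B) (zB : B) (X' : Set (V3 → B)),
    IsSubshift X' ∧ ZeroConj zA zB X X' ∧ betaInv zB X' = k}

/-- Directions of the faces of a Wang cube: `(i, true)` is `+eᵢ`, `(i, false)` is `-eᵢ`. -/
abbrev Dir : Type := Fin 3 × Bool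

/-- The standard basis vectors of `ℤ³`. -/
def unitV : Fin 3 → V3 := ![(1, 0, 0), (0, 1, 0), (0, 0, 1)]

/-- The vector of a direction. -/
def dirVec (s : Dir) : V3 := if s.2 then unitV s.1 else -unitV s.1

/-- The opposite direction. -/
def opp (s : Dir) : Dir := (s.1, !s.2)

/-- The zero cube: all six faces have the zero color. -/
def zeroCube {C : Type} (z : C) : Dir → C := fun _ => z

/-- The set of valid tilings by a finite set `W` of Wang cubes: colors of
matching faces of adjacent cubes agree. -/
def WangTilings {C : Type} (W : Finset (Dir → C)) :
    Set (V3 → {w : Dir → C // w ∈ W}) :=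
  {x | ∀ (v : V3) (s : Dir), (x v).1 s = (x (v + dirVec s)).1 (opp s)}

/-- ℓ∞ distance on `ℤ³`. -/
def dinf (u w : V3) : ℤ :=
  max |u.1 - w.1| (max |u.2.1 - w.2.1| |u.2.2 - w.2.2|)

/-- Reachability in the graph on the support of `x` with edges between
cells at ℓ∞-distance at most `r`. -/
def Reach {A : Type} (z : A) (r : ℕ) (x : V3 → A) : V3 → V3 → Prop :=
  Relation.ReflTransGen (fun u w => x u ≠ z ∧ x w ≠ z ∧ dinf u w ≤ (r : ℤ))

/-- `y` is an `r`-connected component configuration of `x`: it agrees with `x`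
on one `r`-connected component of the support of `x` and is zero elsewhere. -/
def IsCompConf {A : Type} (z : A) (r : ℕ) (x y : V3 → A) : Prop :=
  ∃ v₀ : V3, x v₀ ≠ z ∧
    (∀ u : V3, (x u ≠ z ∧ Reach z r x v₀ u) → y u = x u) ∧
    (∀ u : V3, ¬(x u ≠ z ∧ Reach z r x v₀ u) → y u = z)

/-- A set of configurations is `r`-zero-gluing if membership is equivalent to
membership of all `r`-connected component configurations. -/
def IsZeroGluing {A : Type} (z : A) (r : ℕ) (X : Set (V3 → A)) : Prop :=
  ∀ x : V3 → A, x ∈ X ↔ ∀ y : V3 → A, IsCompConf z r x y → y ∈ X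

/-- The `r`-zero-gluing closure of `X`: the intersection of all `r`-zero-gluing
subshifts containing `X`. -/
def ZGC {A : Type} (z : A) (r : ℕ) (X : Set (V3 → A)) : Set (V3 → A) :=
  ⋂₀ {Y : Set (V3 → A) | IsSubshift Y ∧ IsZeroGluing z r Y ∧ X ⊆ Y}

section ZGCProofAux

open Relation Set Filter Topology

variable {A : Type}

private lemma dinf_symm' (u w : V3) : dinf u w = dinf w u := by
  simp [dinf, abs_sub_comm]

private lemma reach_symm (z : A) (r : ℕ) (x : V3 → A) {a b : V3}
    (h : Reach z r x a b) : Reach z r x b a := by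
  refine Relation.reflTransGen_swap.mp (Relation.ReflTransGen.mono ?_ _ _ h)
  intro p q hpq
  exact ⟨hpq.2.1, hpq.1, by rw [dinf_symm']; exact hpq.2.2⟩

/-- Reachability only depends on finitely many coordinates. -/
private lemma reach_transfer {z : A} {r : ℕ} {x : V3 → A} {a b : V3}
    (h : Reach z r x a b) :
    ∃ P : Set V3, P.Finite ∧ a ∈ P ∧ b ∈ P ∧
      (∀ p ∈ P, p ≠ a → x p ≠ z) ∧
      (∀ w : V3 → A, (∀ p ∈ P, w p = x p) → ∀ p ∈ P, Reach z r w a p) := by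
  induction h with
  | refl =>
      refine ⟨{a}, finite_singleton a, rfl, rfl, ?_, ?_⟩
      · intro p hp hpa; exact absurd hp hpa
      · intro w _ p hp
        rw [Set.mem_singleton_iff] at hp
        rw [hp]
        exact Relation.ReflTransGen.refl
  | @tail b c hab hbc ih =>
      obtain ⟨P, hPf, haP, hbP, hPnz, hPw⟩ := ih
      refine ⟨insert c P, hPf.insert c, Set.mem_insert_of_mem _ haP,
        Set.mem_insert _ _, ?_, ?_⟩
      · rintro p (rfl | hp)
        · exact fun _ => hbc.2.1
        · exact hPnz p hp
      · intro w hw p hp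
        have hw' : ∀ p ∈ P, w p = x p := fun q hq => hw q (Set.mem_insert_of_mem _ hq)
        rcases hp with rfl | hp
        · refine (hPw w hw' b hbP).tail ⟨?_, ?_, hbc.2.2⟩
          · rw [hw' b hbP]; exact hbc.1
          · rw [hw p (Set.mem_insert _ _)]; exact hbc.2.1
        · exact hPw w hw' p hp

/-- The witness in `IsCompConf` can be replaced by any point of the support of `y`. -/
private lemma compconf_at {z : A} {r : ℕ} {x y : V3 → A} (h : IsCompConf z r x y)
    {v₀ : V3} (hv : y v₀ ≠ z) :
    x v₀ ≠ z ∧ (∀ u, (x u ≠ z ∧ Reach z r x v₀ u) → y u = x u) ∧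
      (∀ u, ¬(x u ≠ z ∧ Reach z r x v₀ u) → y u = z) := by
  obtain ⟨w, hw, h1, h2⟩ := h
  have hv' : x v₀ ≠ z ∧ Reach z r x w v₀ := by
    by_contra hc; exact hv (h2 v₀ hc)
  have hiff : ∀ u, (Reach z r x v₀ u ↔ Reach z r x w u) := fun u =>
    ⟨fun hu => hv'.2.trans hu, fun hu => (reach_symm z r x hv'.2).trans hu⟩
  exact ⟨hv'.1, fun u hu => h1 u ⟨hu.1, (hiff u).mp hu.2⟩,
    fun u hu => h2 u fun hc => hu ⟨hc.1, (hiff u).mpr hc.2⟩⟩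

private lemma comp_push {z : A} {r : ℕ} {x y : V3 → A} {v₀ : V3}
    (hv : x v₀ ≠ z)
    (h1 : ∀ u, (x u ≠ z ∧ Reach z r x v₀ u) → y u = x u) :
    ∀ u, Reach z r x v₀ u → x u ≠ z → (y u = x u ∧ Reach z r y v₀ u) := by
  intro u hu
  induction hu with
  | refl => exact fun _ => ⟨h1 v₀ ⟨hv, Relation.ReflTransGen.refl⟩, Relation.ReflTransGen.refl⟩
  | @tail b c hab hbc ih =>
      intro _
      have hb := ih hbc.1
      have hyc : y c = x c := h1 c ⟨hbc.2.1, hab.tail hbc⟩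
      refine ⟨hyc, hb.2.tail ⟨?_, ?_, hbc.2.2⟩⟩
      · rw [hb.1]; exact hbc.1
      · rw [hyc]; exact hbc.2.1

private lemma compconf_self {z : A} {r : ℕ} {x y : V3 → A} (h : IsCompConf z r x y) :
    IsCompConf z r y y := by
  obtain ⟨w, hw, h1, h2⟩ := h
  have hyw : y w = x w := h1 w ⟨hw, Relation.ReflTransGen.refl⟩
  refine ⟨w, by rw [hyw]; exact hw, fun u _ => rfl, ?_⟩
  intro u hu
  by_contra hyu
  have hx : x u ≠ z ∧ Reach z r x w u := by
    by_contra hc; exact hyu (h2 u hc)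
  exact hu ⟨hyu, (comp_push hw h1 u hx.2 hx.1).2⟩

private lemma compconf_unique {z : A} {r : ℕ} {x y y' : V3 → A}
    (h : IsCompConf z r x y) (h' : IsCompConf z r y y') : y' = y := by
  obtain ⟨w, hw, h1, h2⟩ := h
  obtain ⟨w', hw', h1', h2'⟩ := h'
  have supp : ∀ u, y u ≠ z → Reach z r y w u := by
    intro u hyu
    have hx : x u ≠ z ∧ Reach z r x w u := by
      by_contra hc; exact hyu (h2 u hc)
    exact (comp_push hw h1 u hx.2 hx.1).2
  funext u
  by_cases hyu : y u = z
  · rw [hyu]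
    exact h2' u fun hc => hc.1 hyu
  · exact h1' u ⟨hyu, (reach_symm z r y (supp w' hw')).trans (supp u hyu)⟩

private lemma dinf_add' (u w v : V3) : dinf (u + v) (w + v) = dinf u w := by
  simp [dinf, Prod.fst_add, Prod.snd_add, add_sub_add_right_eq_sub]

private lemma dinf_sub' (u w v : V3) : dinf (u - v) (w - v) = dinf u w := by
  simp [dinf, Prod.fst_sub, Prod.snd_sub, sub_sub_sub_cancel_right]

private lemma reach_shift (z : A) (r : ℕ) (x : V3 → A) (v : V3) {a b : V3}
    (h : Reach z r x a b) : Reach z r (shift v x) (a + v) (b + v) := by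
  refine Relation.ReflTransGen.lift (fun u => u + v) ?_ _ _ h
  rintro p q ⟨h1, h2, h3⟩
  refine ⟨?_, ?_, by rw [dinf_add']; exact h3⟩
  · show x (p + v - v) ≠ z; rwa [add_sub_cancel_right]
  · show x (q + v - v) ≠ z; rwa [add_sub_cancel_right]

private lemma reach_unshift (z : A) (r : ℕ) (x : V3 → A) (v : V3) {a b : V3}
    (h : Reach z r (shift v x) a b) : Reach z r x (a - v) (b - v) := by
  refine Relation.ReflTransGen.lift (fun u => u - v) ?_ _ _ h
  rintro p q ⟨h1, h2, h3⟩
  exact ⟨h1, h2, by rw [dinf_sub']; exact h3⟩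

private lemma compconf_shift {z : A} {r : ℕ} {x y : V3 → A} (v : V3)
    (h : IsCompConf z r x y) : IsCompConf z r (shift v x) (shift v y) := by
  obtain ⟨w, hw, h1, h2⟩ := h
  refine ⟨w + v, ?_, ?_, ?_⟩
  · show x (w + v - v) ≠ z; rwa [add_sub_cancel_right]
  · rintro u ⟨hu1, hu2⟩
    have h' := reach_unshift z r x v hu2
    rw [add_sub_cancel_right] at h'
    exact h1 (u - v) ⟨hu1, h'⟩
  · intro u hu
    refine h2 (u - v) ?_
    rintro ⟨hc1, hc2⟩
    have h' := reach_shift z r x v hc2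
    rw [sub_add_cancel] at h'
    exact hu ⟨hc1, h'⟩

private lemma shift_neg_shift (v : V3) (x : V3 → A) : shift (-v) (shift v x) = x := by
  funext u
  show x (u - -v - v) = x u
  rw [sub_neg_eq_add, add_sub_cancel_right]

private lemma shift_shift_neg (v : V3) (x : V3 → A) : shift v (shift (-v) x) = x := by
  funext u
  show x (u - v - -v) = x u
  rw [sub_neg_eq_add, sub_add_cancel]

/-- The candidate for the zero-gluing closure. -/
private def ccl (z : A) (r : ℕ) (X : Set (V3 → A)) : Set (V3 → A) :=
  {x : V3 → A | ∀ y : V3 → A, IsCompConf z r x y → ∃ x' ∈ X, IsCompConf z r x' y}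

private lemma ccl_shift {z : A} {r : ℕ} {X : Set (V3 → A)}
    (hX : ∀ v : V3, ∀ x ∈ X, shift v x ∈ X) :
    ∀ v : V3, ∀ x ∈ ccl z r X, shift v x ∈ ccl z r X := by
  intro v x hx y hy
  have h' : IsCompConf z r x (shift (-v) y) := by
    have h'' := compconf_shift (-v) hy
    rwa [shift_neg_shift] at h''
  obtain ⟨x', hx'X, hcc⟩ := hx _ h'
  refine ⟨shift v x', hX v x' hx'X, ?_⟩
  have h'' := compconf_shift v hcc
  rwa [shift_shift_neg] at h''

private lemma ccl_glue {z : A} {r : ℕ} {X : Set (V3 → A)} :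
    IsZeroGluing z r (ccl z r X) := by
  intro x
  constructor
  · intro hx y hy y' hy'
    rw [compconf_unique hy hy']
    exact hx y hy
  · intro h y hy
    exact h y hy y (compconf_self hy)

private lemma ccl_closed {A : Type} [Fintype A] (z : A) (r : ℕ) (X : Set (V3 → A))
    (hX : IsSubshift X) : @IsClosed _ (prodTop V3 A) (ccl z r X) := by
  classical
  letI : TopologicalSpace A := ⊥
  haveI : DiscreteTopology A := ⟨rfl⟩
  change IsClosed (ccl z r X)
  have hopen : ∀ (D : Set V3), D.Finite → ∀ (x : V3 → A),
      IsOpen {w : V3 → A | ∀ u ∈ D, w u = x u} := by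
    intro D hD x
    have hset : {w : V3 → A | ∀ u ∈ D, w u = x u}
        = ⋂ u ∈ D, (fun w : V3 → A => w u) ⁻¹' {x u} := by
      ext w; simp
    rw [hset]
    exact hD.isOpen_biInter fun u _ =>
      (continuous_apply u).isOpen_preimage _ (isOpen_discrete _)
  refine isClosed_of_closure_subset ?_
  intro x hx y hy
  obtain ⟨v₀, hv₀, hcl1, hcl2⟩ := hy
  -- exhausting family of finite sets
  set D : ℕ → Set V3 := fun m => insert v₀ {u : V3 | Encodable.encode u ≤ m} with hD
  have hDfin : ∀ m, (D m).Finite := by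
    intro m
    refine Set.Finite.insert _ ?_
    have : {u : V3 | Encodable.encode u ≤ m} = Encodable.encode ⁻¹' (Set.Iic m) := rfl
    rw [this]
    exact (Set.finite_Iic m).preimage (Encodable.encode_injective.injOn)
  have hDexh : ∀ P : Set V3, P.Finite → ∃ M : ℕ, ∀ m, M ≤ m → P ⊆ D m := by
    intro P hP
    refine ⟨hP.toFinset.sup Encodable.encode, fun m hm u hu => ?_⟩
    exact Set.mem_insert_of_mem _
      (le_trans (Finset.le_sup (hP.mem_toFinset.mpr hu)) hm)
  have hv₀D : ∀ m, v₀ ∈ D m := fun m => Set.mem_insert _ _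
  -- approximants in ccl agreeing with x on D m
  have happrox : ∀ m : ℕ, ∃ w, (∀ u ∈ D m, w u = x u) ∧ w ∈ ccl z r X := by
    intro m
    obtain ⟨w, hw1, hw2⟩ :=
      mem_closure_iff.mp hx _ (hopen (D m) (hDfin m) x) (fun u _ => rfl)
    exact ⟨w, hw1, hw2⟩
  choose f hf hfS using happrox
  have hfv₀ : ∀ m, f m v₀ = x v₀ := fun m => hf m v₀ (hv₀D m)
  -- the connected component configurations of the approximants
  set Y : ℕ → V3 → A := fun m u =>
    if f m u ≠ z ∧ Reach z r (f m) v₀ u then f m u else z with hYdef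
  have hYcc : ∀ m, IsCompConf z r (f m) (Y m) := by
    intro m
    refine ⟨v₀, by rw [hfv₀ m]; exact hv₀, ?_, ?_⟩
    · intro u hu; simp only [hYdef, if_pos hu]
    · intro u hu; simp only [hYdef, if_neg hu]
  have hYv₀ : ∀ m, Y m v₀ = x v₀ := by
    intro m
    have hcond : f m v₀ ≠ z ∧ Reach z r (f m) v₀ v₀ :=
      ⟨by rw [hfv₀ m]; exact hv₀, Relation.ReflTransGen.refl⟩
    simp only [hYdef, if_pos hcond]
    exact hfv₀ m
  have hYv₀' : ∀ m, Y m v₀ ≠ z := fun m => by rw [hYv₀ m]; exact hv₀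
  -- elements of X having the Y m as component configurations
  have hg' : ∀ m, ∃ x', x' ∈ X ∧ IsCompConf z r x' (Y m) := by
    intro m
    obtain ⟨x', h1, h2⟩ := hfS m (Y m) (hYcc m)
    exact ⟨x', h1, h2⟩
  choose g hgX hgcc using hg'
  have hgn := fun m => compconf_at (hgcc m) (hYv₀' m)
  -- a cluster point of the sequence g
  haveI : CompactSpace (V3 → A) := by infer_instance
  obtain ⟨x', hx'⟩ := exists_clusterPt_of_compactSpace (Filter.map g Filter.atTop)
  have key : ∀ P : Set V3, P.Finite → ∀ M : ℕ,
      ∃ m, M ≤ m ∧ ∀ u ∈ P, g m u = x' u := by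
    intro P hP M
    have hU : {w : V3 → A | ∀ u ∈ P, w u = x' u} ∈ nhds x' :=
      (hopen P hP x').mem_nhds fun u _ => rfl
    have hs : g '' Set.Ici M ∈ Filter.map g Filter.atTop :=
      Filter.image_mem_map (Filter.Ici_mem_atTop M)
    obtain ⟨w, hw1, m, hm, rfl⟩ := clusterPt_iff_nonempty.mp hx' hU hs
    exact ⟨m, hm, hw1⟩
  have hx'X : x' ∈ X := by
    have hle : Filter.map g Filter.atTop ≤ Filter.principal X := by
      rw [Filter.le_principal_iff, Filter.mem_map]
      exact Filter.Eventually.of_forall hgX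
    have hXc : IsClosed X := hX.1
    have := mem_closure_iff_clusterPt.mpr (hx'.mono hle)
    rwa [hXc.closure_eq] at this
  have hx'v₀ : x' v₀ ≠ z := by
    obtain ⟨m, -, hm⟩ := key {v₀} (Set.finite_singleton v₀) 0
    rw [← hm v₀ rfl]
    exact (hgn m).1
  refine ⟨x', hx'X, v₀, hx'v₀, ?_, ?_⟩
  · -- points reachable in x' are in the component of x and agree
    rintro u ⟨hu1, hu2⟩
    obtain ⟨P, hPfin, hPv₀, hPu, hPnz, hPw⟩ := reach_transfer hu2
    obtain ⟨M, hM⟩ := hDexh P hPfin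
    obtain ⟨m, hmM, hgm⟩ := key P hPfin M
    have hPD : P ⊆ D m := hM m hmM
    have hPx' : ∀ p ∈ P, x' p ≠ z := by
      intro p hp
      by_cases hpv : p = v₀
      · rw [hpv]; exact hx'v₀
      · exact hPnz p hp hpv
    have hreachg : ∀ p ∈ P, Reach z r (g m) v₀ p := hPw (g m) hgm
    have hxP : ∀ p ∈ P, x p = x' p := by
      intro p hp
      have h1 : g m p ≠ z := by rw [hgm p hp]; exact hPx' p hp
      have h2 : Y m p = g m p := (hgn m).2.1 p ⟨h1, hreachg p hp⟩
      have h3 : Y m p ≠ z := by rw [h2, hgm p hp]; exact hPx' p hp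
      have h4 : Y m p = f m p := by
        by_cases hc : f m p ≠ z ∧ Reach z r (f m) v₀ p
        · simp only [hYdef, if_pos hc]
        · exact absurd (by simp only [hYdef, if_neg hc]) h3
      rw [← hf m p (hPD hp), ← h4, h2, hgm p hp]
    have hreachx : Reach z r x v₀ u := hPw x hxP u hPu
    have hxu : x u ≠ z := by rw [hxP u hPu]; exact hu1
    rw [hcl1 u ⟨hxu, hreachx⟩]
    exact hxP u hPu
  · -- points outside the component of x' are outside the component of x
    intro u hu
    refine hcl2 u ?_
    rintro ⟨hxu, hxr⟩
    obtain ⟨P, hPfin, hPv₀, hPu, hPnz, hPw⟩ := reach_transfer hxr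
    obtain ⟨M, hM⟩ := hDexh P hPfin
    obtain ⟨m, hmM, hgm⟩ := key P hPfin M
    have hPD : P ⊆ D m := hM m hmM
    have hPxnz : ∀ p ∈ P, x p ≠ z := by
      intro p hp
      by_cases hpv : p = v₀
      · rw [hpv]; exact hv₀
      · exact hPnz p hp hpv
    have hfagree : ∀ p ∈ P, f m p = x p := fun p hp => hf m p (hPD hp)
    have hreachf : ∀ p ∈ P, Reach z r (f m) v₀ p := hPw (f m) hfagree
    have hYfp : ∀ p ∈ P, Y m p = x p := by
      intro p hp
      have hc : f m p ≠ z ∧ Reach z r (f m) v₀ p :=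
        ⟨by rw [hfagree p hp]; exact hPxnz p hp, hreachf p hp⟩
      simp only [hYdef, if_pos hc]
      exact hfagree p hp
    have hx'P : ∀ p ∈ P, x' p = x p := by
      intro p hp
      have hYnz : Y m p ≠ z := by rw [hYfp p hp]; exact hPxnz p hp
      have h1 : g m p ≠ z ∧ Reach z r (g m) v₀ p := by
        by_contra hcon; exact hYnz ((hgn m).2.2 p hcon)
      have h2 : Y m p = g m p := (hgn m).2.1 p h1
      rw [← hgm p hp, ← h2, hYfp p hp]
    have hreach' : Reach z r x' v₀ u := hPw x' (fun p hp => hx'P p hp) u hPu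
    exact hu ⟨by rw [hx'P u hPu]; exact hxu, hreach'⟩

end ZGCProofAux

/-- The `r`-zero-gluing closure of a subshift `X ⊆ A^{ℤ³}` equals the set of
configurations all of whose `r`-connected component configurations are
`r`-connected component configurations of elements of `X`. -/
theorem statement16 {A : Type} [Fintype A] (z : A) (r : ℕ)
    (X : Set (V3 → A)) (hX : IsSubshift X) :
    ZGC z r X =
      {x : V3 → A | ∀ y : V3 → A, IsCompConf z r x y →
        ∃ x' ∈ X, IsCompConf z r x' y} := by
  show ZGC z r X = ccl z r X
  apply Set.eq_of_subset_of_subset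
  · apply Set.sInter_subset_of_mem
    exact ⟨⟨ccl_closed z r X hX, ccl_shift hX.2⟩, ccl_glue,
      fun x hx y hy => ⟨x, hx, hy⟩⟩
  · intro x hx
    refine Set.mem_sInter.mpr ?_
    rintro Yset ⟨hYsub, hYglue, hXY⟩
    rw [hYglue x]
    intro y hy
    obtain ⟨x', hx'X, hx'y⟩ := hx y hy
    exact (hYglue x').mp (hXY hx'X) y hx'y
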